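/- Suppose each project valuation v_k is monotone XoS with v_k(∅)=0. Let A be any allocation and let (p*, z*) be dual feasible. Then there exist an allocation S and a payment vector p̄ such that (S, p̄) is stable, SW(S) ≥ SW(A), and Σ_{i∈𝒩} p̄_i ≤ Σ_{i∈𝒩} p*_i + Σ_{k∈𝒫} z*_k. In particular, if Σ_i p*_i + Σ_k z*_k ≤ α·SW(A) for some α ≥ 1, then Σ_i p̄_i ≤ α·SW(S), yielding an (α, α)-core stable solution. -/
import Mathlib


/-- Black-box reduction for XoS valuations: from any allocation `A` and dual feasible
`(p*, z*)` one can construct a stable solution `(S, p̄)` with `SW(S) ≥ SW(A)` and total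
payments at most the dual objective; in particular, if the dual objective is at most
`α·SW(A)` then the payments are `α`-budget-balanced, yielding an `(α, α)`-core. -/
theorem stmt11 {𝒩 P : Type*} [Fintype 𝒩] [DecidableEq 𝒩] [Fintype P]
    (v : P → Finset 𝒩 → ℝ)
    (hzero : ∀ k, v k ∅ = 0)
    (hnonneg : ∀ k (T : Finset 𝒩), 0 ≤ v k T)
    (hmono : ∀ k (A B : Finset 𝒩), A ⊆ B → v k A ≤ v k B)
    -- each v k is XoS: a pointwise maximum of finitely many nonnegative additive clauses
    (hxos : ∀ k, ∃ (r : ℕ) (a : Fin (r + 1) → 𝒩 → ℝ),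
      (∀ j i, 0 ≤ a j i) ∧
      (∀ T : Finset 𝒩,
        v k T = (Finset.univ : Finset (Fin (r + 1))).sup' Finset.univ_nonempty
          (fun j => ∑ i ∈ T, a j i)))
    -- A is an allocation
    (A : P → Finset 𝒩)
    (hAdisj : ∀ k l, k ≠ l → Disjoint (A k) (A l))
    (hAcover : Finset.univ.biUnion A = Finset.univ)
    -- (p*, z*) is dual feasible
    (pstar : 𝒩 → ℝ) (zstar : P → ℝ)
    (hpstar : ∀ i, 0 ≤ pstar i) (hzstar : ∀ k, 0 ≤ zstar k)
    (hdual : ∀ k (T : Finset 𝒩), v k T ≤ ∑ i ∈ T, pstar i + zstar k) :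
    ∃ (S : P → Finset 𝒩) (pbar : 𝒩 → ℝ),
      -- S is an allocation
      (∀ k l, k ≠ l → Disjoint (S k) (S l)) ∧
      Finset.univ.biUnion S = Finset.univ ∧
      -- p̄ is a payment vector
      (∀ i, 0 ≤ pbar i) ∧
      -- stability
      (∀ k (T : Finset 𝒩), v k (S k ∪ T) ≤ ∑ i ∈ S k ∪ T, pbar i) ∧
      -- SW(S) ≥ SW(A)
      (∑ k, v k (A k) ≤ ∑ k, v k (S k)) ∧
      -- total payments bounded by the dual objective
      (∑ i, pbar i ≤ ∑ i, pstar i + ∑ k, zstar k) ∧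
      -- in particular: α-budget balance
      (∀ α : ℝ, 1 ≤ α → ∑ i, pstar i + ∑ k, zstar k ≤ α * ∑ k, v k (A k) →
        ∑ i, pbar i ≤ α * ∑ k, v k (S k)) := by
  classical
  -- a function g whose fibers are the allocation A
  have hgex : ∀ i : 𝒩, ∃ k, i ∈ A k := by
    intro i
    have : i ∈ Finset.univ.biUnion A := by rw [hAcover]; exact Finset.mem_univ i
    simpa using Finset.mem_biUnion.mp this
  choose g hg using hgex
  haveI : Nonempty (𝒩 → P) := ⟨g⟩
  -- fibers and welfare
  set Sf : (𝒩 → P) → P → Finset 𝒩 :=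
    fun f k => Finset.univ.filter (fun i => f i = k) with hSfdef
  have hmemSf : ∀ (f : 𝒩 → P) k i, i ∈ Sf f k ↔ f i = k := by
    intro f k i; simp [hSfdef]
  set W : (𝒩 → P) → ℝ := fun f => ∑ k, v k (Sf f k) with hWdef
  obtain ⟨f, -, hfmax⟩ :=
    Finset.exists_max_image (Finset.univ : Finset (𝒩 → P)) W Finset.univ_nonempty
  -- fibers of g are exactly A
  have hAg : ∀ k, Sf g k = A k := by
    intro k
    ext i
    rw [hmemSf]
    constructor
    · intro h; rw [← h]; exact hg i
    · intro h
      by_contra hne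
      exact (Finset.disjoint_left.mp (hAdisj (g i) k hne)) (hg i) h
  -- XoS clauses
  choose r a hann hval using hxos
  -- for each project, pick a clause attaining the value at the fiber of f
  have hjex : ∀ k, ∃ j, v k (Sf f k) = ∑ i ∈ Sf f k, a k j i := by
    intro k
    obtain ⟨j, -, hj⟩ := Finset.exists_mem_eq_sup'
      (Finset.univ_nonempty : (Finset.univ : Finset (Fin (r k + 1))).Nonempty)
      (fun j => ∑ i ∈ Sf f k, a k j i)
    exact ⟨j, (hval k _).trans hj⟩
  choose jj hjj using hjex
  -- payments
  set pbar : 𝒩 → ℝ := fun i => a (f i) (jj (f i)) i with hpbardef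
  have hpbarnn : ∀ i, 0 ≤ pbar i := fun i => hann _ _ _
  -- on a fiber, payments sum to the value
  have hpay : ∀ k, ∑ i ∈ Sf f k, pbar i = v k (Sf f k) := by
    intro k
    rw [hjj k]
    refine Finset.sum_congr rfl ?_
    intro i hi
    rw [hmemSf] at hi
    subst hi
    rfl
  -- fiberwise summation
  have hfib : ∀ (q : 𝒩 → ℝ), ∑ k, ∑ i ∈ Sf f k, q i = ∑ i, q i := by
    intro q; exact Finset.sum_fiberwise _ _ _
  have hfibT : ∀ (T : Finset 𝒩) (q : 𝒩 → ℝ),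
      ∑ k, ∑ i ∈ Sf f k ∩ T, q i = ∑ i ∈ T, q i := by
    intro T q
    have h1 : ∀ k, Sf f k ∩ T = T.filter (fun i => f i = k) := by
      intro k; ext i; simp [hSfdef, and_comm]
    simp_rw [h1]
    exact Finset.sum_fiberwise _ _ _
  refine ⟨Sf f, pbar, ?_, ?_, hpbarnn, ?_, ?_, ?_, ?_⟩
  · -- disjointness
    intro k l hkl
    rw [Finset.disjoint_left]
    intro i hik hil
    rw [hmemSf] at hik hil
    exact hkl (hik ▸ hil ▸ rfl)
  · -- cover
    apply Finset.eq_univ_of_forall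
    intro i
    exact Finset.mem_biUnion.mpr ⟨f i, Finset.mem_univ _, (hmemSf f (f i) i).mpr rfl⟩
  · -- stability
    intro k T
    by_contra hc
    push_neg at hc
    set f' : 𝒩 → P := fun i => if i ∈ T then k else f i with hf'def
    have hSk' : Sf f' k = Sf f k ∪ T := by
      ext i
      rw [hmemSf, Finset.mem_union, hmemSf]
      by_cases hi : i ∈ T <;> simp [hf'def, hi]
    have hSl' : ∀ l, l ≠ k → Sf f' l = Sf f l \ T := by
      intro l hl
      ext i
      rw [hmemSf, Finset.mem_sdiff, hmemSf]
      by_cases hi : i ∈ T <;> simp [hf'def, hi, Ne.symm hl]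
    -- lower bound on the value of each damaged fiber
    have hlow : ∀ l, l ≠ k →
        v l (Sf f l) - ∑ i ∈ Sf f l ∩ T, pbar i ≤ v l (Sf f' l) := by
      intro l hl
      rw [hSl' l hl]
      have h1 : ∑ i ∈ Sf f l \ T, a l (jj l) i ≤ v l (Sf f l \ T) := by
        rw [hval]
        exact Finset.le_sup' (fun j => ∑ i ∈ Sf f l \ T, a l j i) (Finset.mem_univ (jj l))
      have h2 : ∑ i ∈ Sf f l \ T, a l (jj l) i
          = ∑ i ∈ Sf f l, a l (jj l) i - ∑ i ∈ Sf f l ∩ T, a l (jj l) i := by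
        rw [← Finset.sdiff_inter_self_left (Sf f l) T]
        exact Finset.sum_sdiff_eq_sub Finset.inter_subset_left
      have h3 : ∑ i ∈ Sf f l ∩ T, a l (jj l) i = ∑ i ∈ Sf f l ∩ T, pbar i := by
        refine Finset.sum_congr rfl ?_
        intro i hi
        have hfil : f i = l := (hmemSf f l i).mp (Finset.mem_inter.mp hi).1
        subst hfil
        rfl
      rw [h2, h3, ← hjj l] at h1
      linarith [h1]
    -- compare welfare of f' and f
    have hWle : W f' ≤ W f := hfmax f' (Finset.mem_univ _)
    have hWf : W f = v k (Sf f k) + ∑ l ∈ Finset.univ.erase k, v l (Sf f l) :=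
      (Finset.add_sum_erase _ _ (Finset.mem_univ k)).symm
    have hWf' : W f' = v k (Sf f' k) + ∑ l ∈ Finset.univ.erase k, v l (Sf f' l) :=
      (Finset.add_sum_erase _ _ (Finset.mem_univ k)).symm
    have hsum1 : ∑ l ∈ Finset.univ.erase k, (v l (Sf f l) - ∑ i ∈ Sf f l ∩ T, pbar i)
        ≤ ∑ l ∈ Finset.univ.erase k, v l (Sf f' l) := by
      refine Finset.sum_le_sum ?_
      intro l hl
      exact hlow l (Finset.mem_erase.mp hl).1
    rw [Finset.sum_sub_distrib] at hsum1
    have hsum2 : ∑ i ∈ Sf f k ∩ T, pbar i + ∑ l ∈ Finset.univ.erase k, ∑ i ∈ Sf f l ∩ T, pbar i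
        = ∑ i ∈ T, pbar i := by
      rw [Finset.add_sum_erase _ (fun l => ∑ i ∈ Sf f l ∩ T, pbar i) (Finset.mem_univ k)]
      exact hfibT T pbar
    have hincl : ∑ i ∈ Sf f k ∪ T, pbar i + ∑ i ∈ Sf f k ∩ T, pbar i
        = ∑ i ∈ Sf f k, pbar i + ∑ i ∈ T, pbar i := Finset.sum_union_inter
    have hpayk := hpay k
    rw [hSk'] at hWf'
    linarith [hc, hWle, hWf, hWf', hsum1, hsum2, hincl, hpayk]
  · -- SW(S) ≥ SW(A)
    have h1 : ∑ k, v k (A k) = W g := by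
      simp_rw [hWdef, hAg]
    rw [h1]
    exact hfmax g (Finset.mem_univ _)
  · -- total payments bounded by dual objective
    have h1 : ∑ i, pbar i = ∑ k, v k (Sf f k) := by
      rw [← hfib pbar]
      exact Finset.sum_congr rfl fun k _ => hpay k
    have h2 : ∑ k, v k (Sf f k) ≤ ∑ k, (∑ i ∈ Sf f k, pstar i + zstar k) :=
      Finset.sum_le_sum fun k _ => hdual k _
    rw [h1]
    calc ∑ k, v k (Sf f k) ≤ ∑ k, (∑ i ∈ Sf f k, pstar i + zstar k) := h2
      _ = ∑ k, ∑ i ∈ Sf f k, pstar i + ∑ k, zstar k := Finset.sum_add_distrib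
      _ = ∑ i, pstar i + ∑ k, zstar k := by rw [hfib pstar]
  · -- α-budget balance
    intro α hα _
    have h1 : ∑ i, pbar i = ∑ k, v k (Sf f k) := by
      rw [← hfib pbar]
      exact Finset.sum_congr rfl fun k _ => hpay k
    have h2 : 0 ≤ ∑ k, v k (Sf f k) := Finset.sum_nonneg fun k _ => hnonneg k _
    nlinarith [h1, h2, hα]
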